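/- For t ≥ 4, the graph G = G(t; 1,…,1) (with all k_i = 1) satisfies a(G) = 4t + ⌊2t/3⌋ and γ₂(G) = 5t, so that γ₂(G) − a(G) = ⌈t/3⌉. -/

import Mathlib

open Classical Finset
noncomputable section

/-- `S` is a 2-dominating set of `G`: every vertex outside `S` has ≥ 2 neighbors in `S`. -/
def IsTwoDomSet {V : Type*} [Fintype V] (G : SimpleGraph V) (S : Finset V) : Prop :=
  ∀ v, v ∉ S → 2 ≤ (G.neighborFinset v ∩ S).card

/-- The 2-domination number. -/
noncomputable def gamma2 {V : Type*} [Fintype V] (G : SimpleGraph V) : ℕ :=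
  sInf {k | ∃ S : Finset V, IsTwoDomSet G S ∧ S.card = k}

/-- `S` is an annihilation set of `G`: the sum of degrees over `S` is at most `m(G)`. -/
def IsAnnSet {V : Type*} [Fintype V] (G : SimpleGraph V) (S : Finset V) : Prop :=
  ∑ v ∈ S, G.degree v ≤ G.edgeFinset.card

/-- The annihilation number: the largest size of an annihilation set (equivalently, the
largest `k` such that the sum of the `k` smallest degrees is at most the edge count). -/
noncomputable def annihilation {V : Type*} [Fintype V] (G : SimpleGraph V) : ℕ :=
  sSup {k | ∃ S : Finset V, IsAnnSet G S ∧ S.card = k}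

/-- Vertices of `G(t; k₁,…,k_t)`: `none` is the hub `w`; `some (Sum.inl ⟨i, j⟩)` is the
`j`-th vertex of the `i`-th cycle `C_{3kᵢ+1}` (vertex `0` is joined to `w`);
`some (Sum.inr ⟨i, p⟩)` is the pendant vertex attached to cycle vertex `p + 1`. -/
abbrev GVert (t : ℕ) (k : Fin t → ℕ) : Type :=
  Option ((Σ i : Fin t, Fin (3 * k i + 1)) ⊕ (Σ i : Fin t, Fin (3 * k i)))

/-- The counterexample graph `G(t; k₁,…,k_t)`. -/
def GG (t : ℕ) (k : Fin t → ℕ) : SimpleGraph (GVert t k) :=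
  SimpleGraph.fromRel (fun a b =>
    match a, b with
    | none, some (Sum.inl ⟨_, j⟩) => (j : ℕ) = 0
    | some (Sum.inl ⟨i, a⟩), some (Sum.inl ⟨i', b⟩) =>
        i = i' ∧ ((b : ℕ) = (a : ℕ) + 1 ∨ ((a : ℕ) = 3 * k i ∧ (b : ℕ) = 0))
    | some (Sum.inl ⟨i, a⟩), some (Sum.inr ⟨i', p⟩) => i = i' ∧ (a : ℕ) = (p : ℕ) + 1
    | _, _ => False)

namespace Stmt13

abbrev V (t : ℕ) := GVert t (fun _ => 1)
abbrev G (t : ℕ) : SimpleGraph (V t) := GG t (fun _ => 1)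
abbrev w (t : ℕ) : V t := none
abbrev cy (t : ℕ) (i : Fin t) (j : Fin 4) : V t := some (Sum.inl ⟨i, j⟩)
abbrev pd (t : ℕ) (i : Fin t) (j : Fin 3) : V t := some (Sum.inr ⟨i, j⟩)

variable {t : ℕ}

lemma cy_inj {i i' : Fin t} {j j' : Fin 4} : cy t i j = cy t i' j' ↔ i = i' ∧ j = j' := by
  constructor
  · intro h
    have h1 := Sigma.mk.inj_iff.mp (Sum.inl.inj (Option.some.inj h))
    obtain ⟨hi, hj⟩ := h1
    exact ⟨hi, by subst hi; exact eq_of_heq hj⟩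
  · rintro ⟨rfl, rfl⟩; rfl

lemma pd_inj {i i' : Fin t} {j j' : Fin 3} : pd t i j = pd t i' j' ↔ i = i' ∧ j = j' := by
  constructor
  · intro h
    have h1 := Sigma.mk.inj_iff.mp (Sum.inr.inj (Option.some.inj h))
    obtain ⟨hi, hj⟩ := h1
    exact ⟨hi, by subst hi; exact eq_of_heq hj⟩
  · rintro ⟨rfl, rfl⟩; rfl

lemma cy_ne_pd {i i' : Fin t} {j : Fin 4} {p : Fin 3} : cy t i j ≠ pd t i' p := by
  intro h; exact absurd (Option.some.inj h) (by simp)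

lemma w_ne_cy {i : Fin t} {j : Fin 4} : w t ≠ cy t i j := by simp [w, cy]
lemma w_ne_pd {i : Fin t} {p : Fin 3} : w t ≠ pd t i p := by simp [w, pd]

lemma adj_cy_cy {i i' : Fin t} {j j' : Fin 4} :
    (G t).Adj (cy t i j) (cy t i' j') ↔
      i = i' ∧ ((j':ℕ) = j + 1 ∨ ((j:ℕ) = 3 ∧ (j':ℕ) = 0) ∨ (j:ℕ) = j' + 1 ∨ ((j':ℕ) = 3 ∧ (j:ℕ) = 0)) := by
  simp only [G, GG, cy, SimpleGraph.fromRel_adj]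
  constructor
  · rintro ⟨hne, h | h⟩
    · exact ⟨h.1, by omega⟩
    · exact ⟨h.1.symm, by omega⟩
  · rintro ⟨rfl, h⟩
    refine ⟨?_, ?_⟩
    · intro hc
      have : j = j' := (cy_inj.mp hc).2
      omega
    · rcases h with h | h | h | h
      · exact Or.inl ⟨rfl, Or.inl h⟩
      · exact Or.inl ⟨rfl, Or.inr h⟩
      · exact Or.inr ⟨rfl, Or.inl h⟩
      · exact Or.inr ⟨rfl, Or.inr h⟩

lemma adj_w_cy {i : Fin t} {j : Fin 4} :
    (G t).Adj (w t) (cy t i j) ↔ (j:ℕ) = 0 := by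
  simp only [G, GG, w, cy, SimpleGraph.fromRel_adj]
  constructor
  · rintro ⟨-, h | h⟩; exact h; exact h.elim
  · intro h; exact ⟨by simp, Or.inl h⟩

lemma adj_cy_pd {i i' : Fin t} {j : Fin 4} {p : Fin 3} :
    (G t).Adj (cy t i j) (pd t i' p) ↔ i = i' ∧ (j:ℕ) = p + 1 := by
  simp only [G, GG, cy, pd, SimpleGraph.fromRel_adj]
  constructor
  · rintro ⟨-, h | h⟩; exact h; exact h.elim
  · intro h; exact ⟨by simp, Or.inl h⟩

lemma not_adj_pd_pd {i i' : Fin t} {p p' : Fin 3} :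
    ¬ (G t).Adj (pd t i p) (pd t i' p') := by
  simp [G, GG, pd, SimpleGraph.fromRel_adj]

lemma not_adj_w_pd {i : Fin t} {p : Fin 3} :
    ¬ (G t).Adj (w t) (pd t i p) := by
  simp [G, GG, w, pd, SimpleGraph.fromRel_adj]

lemma nbrs_w : (G t).neighborFinset (w t) = univ.image (fun i : Fin t => cy t i 0) := by
  ext v
  rw [SimpleGraph.mem_neighborFinset]
  rcases v with _ | (⟨i', a⟩ | ⟨i', p⟩)
  · simp [w]
  · rw [show (some (Sum.inl ⟨i', a⟩) : V t) = cy t i' a from rfl, adj_w_cy]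
    simp only [mem_image, mem_univ, true_and]
    constructor
    · intro h
      refine ⟨i', ?_⟩
      have : a = (0 : Fin 4) := Fin.ext h
      rw [this]
    · rintro ⟨i, hi⟩
      obtain ⟨rfl, rfl⟩ := cy_inj.mp hi.symm
      rfl
  · rw [show (some (Sum.inr ⟨i', p⟩) : V t) = pd t i' p from rfl]
    simp only [iff_false_intro not_adj_w_pd, false_iff, mem_image, mem_univ, true_and, not_exists]
    intro i h
    exact cy_ne_pd h

lemma adj_cy_w {i : Fin t} {j : Fin 4} :
    (G t).Adj (cy t i j) (w t) ↔ (j:ℕ) = 0 := by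
  rw [SimpleGraph.adj_comm]; exact adj_w_cy

lemma adj_pd_cy {i i' : Fin t} {p : Fin 3} {j : Fin 4} :
    (G t).Adj (pd t i p) (cy t i' j) ↔ i' = i ∧ (j:ℕ) = p + 1 := by
  rw [SimpleGraph.adj_comm]; exact adj_cy_pd

lemma not_adj_pd_w {i : Fin t} {p : Fin 3} : ¬ (G t).Adj (pd t i p) (w t) := by
  rw [SimpleGraph.adj_comm]; exact not_adj_w_pd

lemma cy_ne_w {i : Fin t} {j : Fin 4} : cy t i j ≠ w t := by simp [w, cy]
lemma pd_ne_w {i : Fin t} {p : Fin 3} : pd t i p ≠ w t := by simp [w, pd]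
lemma pd_ne_cy {i i' : Fin t} {p : Fin 3} {j : Fin 4} : pd t i p ≠ cy t i' j := by
  intro h; exact absurd (Option.some.inj h) (by simp)

lemma v40 : ((0:Fin 4):ℕ) = 0 := rfl
lemma v41 : ((1:Fin 4):ℕ) = 1 := rfl
lemma v42 : ((2:Fin 4):ℕ) = 2 := rfl
lemma v43 : ((3:Fin 4):ℕ) = 3 := rfl
lemma v30 : ((0:Fin 3):ℕ) = 0 := rfl
lemma v31 : ((1:Fin 3):ℕ) = 1 := rfl
lemma v32 : ((2:Fin 3):ℕ) = 2 := rfl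

lemma nbrs_cy0 (i : Fin t) :
    (G t).neighborFinset (cy t i 0) = {w t, cy t i 1, cy t i 3} := by
  ext v
  rw [SimpleGraph.mem_neighborFinset]
  rcases v with _ | (⟨i', a⟩ | ⟨i', p⟩)
  · simp [adj_cy_w, w, cy]
  · have ha : (a:ℕ) < 4 := a.isLt
    rw [show (some (Sum.inl ⟨i', a⟩) : V t) = cy t i' a from rfl, adj_cy_cy]
    simp only [mem_insert, mem_singleton, cy_inj, cy_ne_w, Fin.ext_iff, v40, v41, v42, v43, and_true, true_and,
      iff_false_intro cy_ne_w, false_or]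
    omega
  · have hp : (p:ℕ) < 3 := p.isLt
    rw [show (some (Sum.inr ⟨i', p⟩) : V t) = pd t i' p from rfl, adj_cy_pd]
    simp only [mem_insert, mem_singleton, iff_false_intro pd_ne_w, iff_false_intro pd_ne_cy,
      Fin.ext_iff, v40, or_self, false_or, or_false, iff_false]
    omega

lemma nbrs_cy1 (i : Fin t) :
    (G t).neighborFinset (cy t i 1) = {cy t i 0, cy t i 2, pd t i 0} := by
  ext v
  rw [SimpleGraph.mem_neighborFinset]
  rcases v with _ | (⟨i', a⟩ | ⟨i', p⟩)
  · simp [adj_cy_w, w, cy, pd, v40, v41, v42, v43]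
  · have ha : (a:ℕ) < 4 := a.isLt
    rw [show (some (Sum.inl ⟨i', a⟩) : V t) = cy t i' a from rfl, adj_cy_cy]
    simp only [mem_insert, mem_singleton, cy_inj, Fin.ext_iff, v40, v41, v42, v43, and_true, true_and,
      iff_false_intro cy_ne_pd, or_false]
    omega
  · have hp : (p:ℕ) < 3 := p.isLt
    rw [show (some (Sum.inr ⟨i', p⟩) : V t) = pd t i' p from rfl, adj_cy_pd]
    simp only [mem_insert, mem_singleton, iff_false_intro pd_ne_cy, pd_inj, Fin.ext_iff,
      v41, v30, false_or]
    omega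

lemma nbrs_cy2 (i : Fin t) :
    (G t).neighborFinset (cy t i 2) = {cy t i 1, cy t i 3, pd t i 1} := by
  ext v
  rw [SimpleGraph.mem_neighborFinset]
  rcases v with _ | (⟨i', a⟩ | ⟨i', p⟩)
  · simp [adj_cy_w, w, cy, pd, v40, v41, v42, v43]
  · have ha : (a:ℕ) < 4 := a.isLt
    rw [show (some (Sum.inl ⟨i', a⟩) : V t) = cy t i' a from rfl, adj_cy_cy]
    simp only [mem_insert, mem_singleton, cy_inj, Fin.ext_iff, v40, v41, v42, v43, and_true, true_and,
      iff_false_intro cy_ne_pd, or_false]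
    omega
  · have hp : (p:ℕ) < 3 := p.isLt
    rw [show (some (Sum.inr ⟨i', p⟩) : V t) = pd t i' p from rfl, adj_cy_pd]
    simp only [mem_insert, mem_singleton, iff_false_intro pd_ne_cy, pd_inj, Fin.ext_iff,
      v42, v31, false_or]
    omega

lemma nbrs_cy3 (i : Fin t) :
    (G t).neighborFinset (cy t i 3) = {cy t i 0, cy t i 2, pd t i 2} := by
  ext v
  rw [SimpleGraph.mem_neighborFinset]
  rcases v with _ | (⟨i', a⟩ | ⟨i', p⟩)
  · simp [adj_cy_w, w, cy, pd, v40, v41, v42, v43]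
  · have ha : (a:ℕ) < 4 := a.isLt
    rw [show (some (Sum.inl ⟨i', a⟩) : V t) = cy t i' a from rfl, adj_cy_cy]
    simp only [mem_insert, mem_singleton, cy_inj, Fin.ext_iff, v40, v41, v42, v43, and_true, true_and,
      iff_false_intro cy_ne_pd, or_false]
    omega
  · have hp : (p:ℕ) < 3 := p.isLt
    rw [show (some (Sum.inr ⟨i', p⟩) : V t) = pd t i' p from rfl, adj_cy_pd]
    simp only [mem_insert, mem_singleton, iff_false_intro pd_ne_cy, pd_inj, Fin.ext_iff,
      v43, v32, false_or]
    omega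

lemma nbrs_pd (i : Fin t) (p : Fin 3) :
    (G t).neighborFinset (pd t i p) = {cy t i ⟨(p:ℕ)+1, by omega⟩} := by
  ext v
  rw [SimpleGraph.mem_neighborFinset]
  rcases v with _ | (⟨i', a⟩ | ⟨i', p'⟩)
  · simp [not_adj_pd_w, w, cy]
  · have ha : (a:ℕ) < 4 := a.isLt
    rw [show (some (Sum.inl ⟨i', a⟩) : V t) = cy t i' a from rfl, adj_pd_cy]
    simp only [mem_singleton, cy_inj, Fin.ext_iff]
    try omega
  · rw [show (some (Sum.inr ⟨i', p'⟩) : V t) = pd t i' p' from rfl]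
    simp only [iff_false_intro not_adj_pd_pd, false_iff, mem_singleton]
    intro h
    exact pd_ne_cy h
lemma cy_ne_cy' {i : Fin t} {j j' : Fin 4} (h : (j:ℕ) ≠ (j':ℕ)) : cy t i j ≠ cy t i j' := by
  intro hc
  exact h (Fin.ext_iff.mp (cy_inj.mp hc).2)

lemma card3 {a b c : V t} (h1 : a ≠ b) (h2 : a ≠ c) (h3 : b ≠ c) :
    ({a, b, c} : Finset (V t)).card = 3 := by
  rw [card_insert_of_notMem (by simp [h1, h2]), card_insert_of_notMem (by simp [h3]),
    card_singleton]

lemma deg_cy0 (i : Fin t) : (G t).degree (cy t i 0) = 3 := by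
  show ((G t).neighborFinset _).card = 3
  rw [nbrs_cy0]
  exact card3 (Ne.symm cy_ne_w) (Ne.symm cy_ne_w) (cy_ne_cy' (by decide))

lemma deg_cy1 (i : Fin t) : (G t).degree (cy t i 1) = 3 := by
  show ((G t).neighborFinset _).card = 3
  rw [nbrs_cy1]
  exact card3 (cy_ne_cy' (by decide)) cy_ne_pd cy_ne_pd

lemma deg_cy2 (i : Fin t) : (G t).degree (cy t i 2) = 3 := by
  show ((G t).neighborFinset _).card = 3
  rw [nbrs_cy2]
  exact card3 (cy_ne_cy' (by decide)) cy_ne_pd cy_ne_pd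

lemma deg_cy3 (i : Fin t) : (G t).degree (cy t i 3) = 3 := by
  show ((G t).neighborFinset _).card = 3
  rw [nbrs_cy3]
  exact card3 (cy_ne_cy' (by decide)) cy_ne_pd cy_ne_pd

lemma deg_cy (i : Fin t) (j : Fin 4) : (G t).degree (cy t i j) = 3 := by
  rcases j with ⟨jv, hj⟩
  interval_cases jv
  · exact deg_cy0 i
  · exact deg_cy1 i
  · exact deg_cy2 i
  · exact deg_cy3 i

lemma deg_pd (i : Fin t) (p : Fin 3) : (G t).degree (pd t i p) = 1 := by
  show ((G t).neighborFinset _).card = 1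
  rw [nbrs_pd]
  exact card_singleton _

lemma deg_w : (G t).degree (w t) = t := by
  show ((G t).neighborFinset _).card = t
  rw [nbrs_w, card_image_of_injective _ (fun x y h => (cy_inj.mp h).1), card_univ,
    Fintype.card_fin]

lemma sum_deg : ∑ v : V t, (G t).degree v = 16 * t := by
  rw [Fintype.sum_option, Fintype.sum_sum_type]
  have h1 : ∑ x : (Σ i : Fin t, Fin (3 * (fun _ : Fin t => 1) i + 1)),
      (G t).degree (some (Sum.inl x)) = 12 * t := by
    rw [Finset.sum_congr rfl (fun x _ => (deg_cy x.1 x.2 : _))]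
    rw [Finset.sum_const, card_univ, smul_eq_mul]
    simp [Fintype.card_sigma]
    ring
  have h2 : ∑ x : (Σ i : Fin t, Fin (3 * (fun _ : Fin t => 1) i)),
      (G t).degree (some (Sum.inr x)) = 3 * t := by
    rw [Finset.sum_congr rfl (fun x _ => (deg_pd x.1 x.2 : _))]
    rw [Finset.sum_const, card_univ, smul_eq_mul]
    simp [Fintype.card_sigma]
    ring
  rw [h1, h2, show (G t).degree none = t from deg_w]
  ring

lemma card_edges : (G t).edgeFinset.card = 8 * t := by
  have h := SimpleGraph.sum_degrees_eq_twice_card_edges (G t)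
  rw [sum_deg] at h
  omega
def P (t : ℕ) : Finset (V t) :=
  univ.image (fun x : Σ _ : Fin t, Fin 3 => pd t x.1 x.2)

lemma mem_P {v : V t} : v ∈ P t ↔ ∃ i p, v = pd t i p := by
  simp only [P, mem_image, mem_univ, true_and]
  constructor
  · rintro ⟨⟨i, p⟩, h⟩; exact ⟨i, p, h.symm⟩
  · rintro ⟨i, p, rfl⟩; exact ⟨⟨i, p⟩, rfl⟩

lemma pd_mem_P {i : Fin t} {p : Fin 3} : pd t i p ∈ P t := mem_P.mpr ⟨i, p, rfl⟩

lemma pd_inj' : Function.Injective (fun x : Σ _ : Fin t, Fin 3 => pd t x.1 x.2) := by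
  rintro ⟨i, p⟩ ⟨i', p'⟩ h
  obtain ⟨h1, h2⟩ := pd_inj.mp h
  subst h1; subst h2; rfl

lemma card_P : (P t).card = 3 * t := by
  rw [P, card_image_of_injective _ pd_inj', card_univ, Fintype.card_sigma]
  simp [mul_comm]

lemma deg_pos (ht : 1 ≤ t) (v : V t) : 1 ≤ (G t).degree v := by
  rcases v with _ | (⟨i, a⟩ | ⟨i, p⟩)
  · rw [show (none : V t) = w t from rfl, deg_w]; omega
  · rw [show (some (Sum.inl ⟨i, a⟩) : V t) = cy t i a from rfl, deg_cy]; omega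
  · rw [show (some (Sum.inr ⟨i, p⟩) : V t) = pd t i p from rfl, deg_pd]

lemma deg_ge3 (ht : 3 ≤ t) (v : V t) (hv : v ∉ P t) : 3 ≤ (G t).degree v := by
  rcases v with _ | (⟨i, a⟩ | ⟨i, p⟩)
  · rw [show (none : V t) = w t from rfl, deg_w]; omega
  · rw [show (some (Sum.inl ⟨i, a⟩) : V t) = cy t i a from rfl, deg_cy]
  · exact absurd (pd_mem_P (i := i) (p := p)) hv

def f (t : ℕ) (n : ℕ) : V t :=
  if h : n / 4 < t then cy t ⟨n / 4, h⟩ ⟨n % 4, by omega⟩ else w t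

lemma f_injOn {n m : ℕ} (hn : n < 4 * t) (hm : m < 4 * t)
    (h : f t n = f t m) : n = m := by
  have hn4 : n / 4 < t := by omega
  have hm4 : m / 4 < t := by omega
  simp only [f, dif_pos hn4, dif_pos hm4] at h
  obtain ⟨h1, h2⟩ := cy_inj.mp h
  have e1 : n / 4 = m / 4 := Fin.ext_iff.mp h1
  have e2 : n % 4 = m % 4 := Fin.ext_iff.mp h2
  omega

lemma f_is_cy {n : ℕ} (hn : n / 4 < t) : ∃ i j, f t n = cy t i j := by
  rw [f, dif_pos hn]; exact ⟨_, _, rfl⟩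

def AS (t : ℕ) : Finset (V t) := P t ∪ (Finset.range (5 * t / 3)).image (f t)

lemma AS_disj (ht : 0 < t) : Disjoint (P t) ((Finset.range (5 * t / 3)).image (f t)) := by
  rw [disjoint_left]
  intro u hu hu'
  obtain ⟨i, p, rfl⟩ := mem_P.mp hu
  obtain ⟨n, hn1, hn⟩ := mem_image.mp hu'
  rw [mem_range] at hn1
  obtain ⟨i', j, hj⟩ := f_is_cy (show n / 4 < t by omega)
  rw [hj] at hn
  exact pd_ne_cy hn.symm

lemma card_AS_image (ht : 0 < t) : ((Finset.range (5 * t / 3)).image (f t)).card = 5 * t / 3 := by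
  rw [card_image_of_injOn, card_range]
  intro n hn m hm h
  rw [mem_coe, mem_range] at hn hm
  exact f_injOn (by omega) (by omega) h

lemma card_AS (ht : 0 < t) : (AS t).card = 4 * t + 2 * t / 3 := by
  rw [AS, card_union_of_disjoint (AS_disj ht), card_P, card_AS_image ht]
  omega

lemma AS_ann (ht : 1 ≤ t) : IsAnnSet (G t) (AS t) := by
  unfold IsAnnSet
  rw [card_edges, AS, sum_union (AS_disj ht)]
  have h1 : ∑ v ∈ P t, (G t).degree v = 3 * t := by
    rw [P, sum_image (fun x _ y _ h => pd_inj' h)]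
    rw [Finset.sum_congr rfl (fun x _ => (deg_pd x.1 x.2 : _)), Finset.sum_const, card_univ,
      Fintype.card_sigma, smul_eq_mul]
    simp [mul_comm]
  have h2 : ∑ v ∈ (Finset.range (5 * t / 3)).image (f t), (G t).degree v = 3 * (5 * t / 3) := by
    rw [sum_image (fun n hn m hm h => f_injOn (by rw [mem_coe, mem_range] at hn; omega)
      (by rw [mem_coe, mem_range] at hm; omega) h)]
    have : ∀ n ∈ Finset.range (5 * t / 3), (G t).degree (f t n) = 3 := by
      intro n hn
      rw [mem_range] at hn
      obtain ⟨i, j, hj⟩ := f_is_cy (show n / 4 < t by omega)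
      rw [hj, deg_cy]
    rw [Finset.sum_congr rfl this, Finset.sum_const, card_range, smul_eq_mul, mul_comm]
  rw [h1, h2]
  omega

lemma ann_le (ht : 3 ≤ t) (S : Finset (V t)) (hS : IsAnnSet (G t) S) :
    S.card ≤ 4 * t + 2 * t / 3 := by
  unfold IsAnnSet at hS
  rw [card_edges] at hS
  have hsplit : ∑ v ∈ S.filter (· ∈ P t), (G t).degree v
      + ∑ v ∈ S.filter (· ∉ P t), (G t).degree v = ∑ v ∈ S, (G t).degree v :=
    sum_filter_add_sum_filter_not S _ _
  have hb1 : (S.filter (· ∈ P t)).card * 1 ≤ ∑ v ∈ S.filter (· ∈ P t), (G t).degree v := by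
    rw [mul_one]
    calc (S.filter (· ∈ P t)).card = ∑ _v ∈ S.filter (· ∈ P t), (1:ℕ) := by rw [Finset.sum_const, smul_eq_mul, mul_one]
    _ ≤ _ := Finset.sum_le_sum (fun v _ => deg_pos (by omega) v)
  have hb2 : (S.filter (· ∉ P t)).card * 3 ≤ ∑ v ∈ S.filter (· ∉ P t), (G t).degree v := by
    calc (S.filter (· ∉ P t)).card * 3 = ∑ _v ∈ S.filter (· ∉ P t), (3:ℕ) := by rw [Finset.sum_const, smul_eq_mul]
    _ ≤ _ := Finset.sum_le_sum (fun v hv => deg_ge3 ht v (mem_filter.mp hv).2)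
  have hcards := card_filter_add_card_filter_not (s := S) (p := (· ∈ P t))
  have hPle : (S.filter (· ∈ P t)).card ≤ 3 * t := by
    rw [← card_P (t := t)]
    exact card_le_card (fun v hv => (mem_filter.mp hv).2)
  omega

lemma ann_eq (ht : 4 ≤ t) : annihilation (G t) = 4 * t + 2 * t / 3 := by
  have hmem : 4 * t + 2 * t / 3 ∈ {k | ∃ S : Finset (V t), IsAnnSet (G t) S ∧ S.card = k} :=
    ⟨AS t, AS_ann (by omega), card_AS (by omega)⟩
  have hub : ∀ k ∈ {k | ∃ S : Finset (V t), IsAnnSet (G t) S ∧ S.card = k}, k ≤ 4 * t + 2 * t / 3 := by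
    rintro k ⟨S, hS, rfl⟩
    exact ann_le (by omega) S hS
  exact le_antisymm (csSup_le ⟨_, hmem⟩ hub) (le_csSup ⟨_, hub⟩ hmem)
def D (t : ℕ) : Finset (V t) :=
  P t ∪ univ.image (fun i : Fin t => cy t i 0) ∪ univ.image (fun i : Fin t => cy t i 2)

lemma cy0_mem_D {i : Fin t} : cy t i 0 ∈ D t :=
  mem_union_left _ (mem_union_right _ (mem_image.mpr ⟨i, mem_univ i, rfl⟩))

lemma cy2_mem_D {i : Fin t} : cy t i 2 ∈ D t :=
  mem_union_right _ (mem_image.mpr ⟨i, mem_univ i, rfl⟩)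

lemma pd_mem_D {i : Fin t} {p : Fin 3} : pd t i p ∈ D t :=
  mem_union_left _ (mem_union_left _ pd_mem_P)

lemma card_D : (D t).card = 5 * t := by
  have hinj0 : Function.Injective (fun i : Fin t => cy t i 0) :=
    fun x y h => (cy_inj.mp h).1
  have hinj2 : Function.Injective (fun i : Fin t => cy t i 2) :=
    fun x y h => (cy_inj.mp h).1
  have hd1 : Disjoint (P t) (univ.image (fun i : Fin t => cy t i 0)) := by
    rw [disjoint_left]
    intro u hu hu'
    obtain ⟨i, p, rfl⟩ := mem_P.mp hu
    obtain ⟨i', -, h⟩ := mem_image.mp hu'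
    exact pd_ne_cy h.symm
  have hd2 : Disjoint (P t ∪ univ.image (fun i : Fin t => cy t i 0))
      (univ.image (fun i : Fin t => cy t i 2)) := by
    rw [disjoint_left]
    intro u hu hu'
    obtain ⟨i', -, h⟩ := mem_image.mp hu'
    rcases mem_union.mp hu with hu | hu
    · obtain ⟨i, p, rfl⟩ := mem_P.mp hu
      exact pd_ne_cy h.symm
    · obtain ⟨i, -, h0⟩ := mem_image.mp hu
      have h02 : cy t i (0 : Fin 4) = cy t i' 2 := h0.trans h.symm
      exact absurd (Fin.ext_iff.mp (cy_inj.mp h02).2) (by decide)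
  rw [D, card_union_of_disjoint hd2, card_union_of_disjoint hd1, card_P,
    card_image_of_injective _ hinj0, card_image_of_injective _ hinj2, card_univ,
    Fintype.card_fin]
  ring
lemma D_twodom (ht : 4 ≤ t) : IsTwoDomSet (G t) (D t) := by
  intro v hv
  rcases v with _ | (⟨i, a⟩ | ⟨i, p⟩)
  · rw [show (none : V t) = w t from rfl, nbrs_w]
    refine one_lt_card.mpr ⟨cy t ⟨0, by omega⟩ 0, ?_, cy t ⟨1, by omega⟩ 0, ?_, ?_⟩
    · simp only [mem_inter]
      exact ⟨mem_image.mpr ⟨⟨0, by omega⟩, mem_univ _, rfl⟩, cy0_mem_D⟩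
    · simp only [mem_inter]
      exact ⟨mem_image.mpr ⟨⟨1, by omega⟩, mem_univ _, rfl⟩, cy0_mem_D⟩
    intro h
    have h1 := Fin.ext_iff.mp (cy_inj.mp h).1
    simp at h1
  · rcases a with ⟨av, hav⟩
    have hav4 : av < 4 := hav
    interval_cases av
    · exact absurd (cy0_mem_D (i := i)) hv
    · rw [show (some (Sum.inl ⟨i, ⟨1, hav⟩⟩) : V t) = cy t i 1 from rfl, nbrs_cy1]
      refine one_lt_card.mpr ⟨cy t i 0, ?_, cy t i 2, ?_, cy_ne_cy' (by decide)⟩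
      · simp only [mem_inter]
        exact ⟨mem_insert_self _ _, cy0_mem_D⟩
      · simp only [mem_inter]
        exact ⟨mem_insert_of_mem (mem_insert_self _ _), cy2_mem_D⟩
    · exact absurd (cy2_mem_D (i := i)) hv
    · rw [show (some (Sum.inl ⟨i, ⟨3, hav⟩⟩) : V t) = cy t i 3 from rfl, nbrs_cy3]
      refine one_lt_card.mpr ⟨cy t i 0, ?_, cy t i 2, ?_, cy_ne_cy' (by decide)⟩
      · simp only [mem_inter]
        exact ⟨mem_insert_self _ _, cy0_mem_D⟩
      · simp only [mem_inter]
        exact ⟨mem_insert_of_mem (mem_insert_self _ _), cy2_mem_D⟩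
  · exact absurd (pd_mem_D (i := i) (p := p)) hv

def Ci (t : ℕ) (i : Fin t) : Finset (V t) := {cy t i 0, cy t i 1, cy t i 2, cy t i 3}

lemma cy_mem_Ci {i : Fin t} (a : Fin 4) : cy t i a ∈ Ci t i := by
  rcases a with ⟨av, hav⟩
  have hav4 : av < 4 := hav
  interval_cases av
  · exact mem_insert_self _ _
  · exact mem_insert_of_mem (mem_insert_self _ _)
  · exact mem_insert_of_mem (mem_insert_of_mem (mem_insert_self _ _))
  · exact mem_insert_of_mem (mem_insert_of_mem (mem_insert_of_mem (mem_singleton_self _)))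

lemma mem_Ci {i : Fin t} {u : V t} (hu : u ∈ Ci t i) : ∃ a : Fin 4, u = cy t i a := by
  rcases mem_insert.mp hu with rfl | hu
  · exact ⟨0, rfl⟩
  rcases mem_insert.mp hu with rfl | hu
  · exact ⟨1, rfl⟩
  rcases mem_insert.mp hu with rfl | hu
  · exact ⟨2, rfl⟩
  · exact ⟨3, mem_singleton.mp hu⟩

lemma lower_bound (ht : 4 ≤ t) (S : Finset (V t)) (hS : IsTwoDomSet (G t) S) :
    5 * t ≤ S.card := by
  -- pendants are in S
  have hPS : P t ⊆ S := by
    intro v hv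
    by_contra hns
    have h2 := hS v hns
    obtain ⟨i, p, rfl⟩ := mem_P.mp hv
    rw [nbrs_pd] at h2
    obtain ⟨u, hu, u', hu', hne⟩ := one_lt_card.mp h2
    simp only [mem_inter] at hu hu'
    exact hne ((mem_singleton.mp hu.1).trans (mem_singleton.mp hu'.1).symm)
  -- if v ∉ S and N(v) = {a,b,x} with a,b ∉ S, contradiction
  have honly : ∀ (v a b x : V t), (G t).neighborFinset v = {a, b, x} →
      v ∉ S → a ∉ S → b ∉ S → False := by
    intro v a b x hN hv hna hnb
    have h2 := hS v hv
    rw [hN] at h2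
    obtain ⟨u, hu, u', hu', hne⟩ := one_lt_card.mp h2
    simp only [mem_inter] at hu hu'
    have me : ∀ z, z ∈ ({a, b, x} : Finset (V t)) → z ∈ S → z = x := by
      intro z hz hzS
      rcases mem_insert.mp hz with rfl | hz
      · exact absurd hzS hna
      rcases mem_insert.mp hz with rfl | hz
      · exact absurd hzS hnb
      · exact mem_singleton.mp hz
    exact hne ((me u hu.1 hu.2).trans (me u' hu'.1 hu'.2).symm)
  -- per-cycle lower bound
  have key : ∀ i : Fin t, 2 ≤ (S ∩ Ci t i).card := by
    intro i
    by_contra hlt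
    have hpair : ∀ (a b : Fin 4), (a:ℕ) ≠ (b:ℕ) → cy t i a ∈ S → cy t i b ∈ S → False := by
      intro a b hne ha hb
      refine hlt (one_lt_card.mpr ⟨cy t i a, ?_, cy t i b, ?_, cy_ne_cy' hne⟩)
      · simp only [mem_inter]; exact ⟨ha, cy_mem_Ci a⟩
      · simp only [mem_inter]; exact ⟨hb, cy_mem_Ci b⟩
    by_cases h1 : cy t i 1 ∈ S <;> by_cases h3 : cy t i 3 ∈ S
    · exact hpair 1 3 (by decide) h1 h3
    · by_cases h0 : cy t i 0 ∈ S
      · exact hpair 1 0 (by decide) h1 h0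
      by_cases h2 : cy t i 2 ∈ S
      · exact hpair 1 2 (by decide) h1 h2
      exact honly _ _ _ _ (nbrs_cy3 i) h3 h0 h2
    · by_cases h0 : cy t i 0 ∈ S
      · exact hpair 3 0 (by decide) h3 h0
      by_cases h2 : cy t i 2 ∈ S
      · exact hpair 3 2 (by decide) h3 h2
      exact honly _ _ _ _ (nbrs_cy1 i) h1 h0 h2
    · by_cases h0 : cy t i 0 ∈ S <;> by_cases h2 : cy t i 2 ∈ S
      · exact hpair 0 2 (by decide) h0 h2
      · exact honly _ _ _ _ (nbrs_cy2 i) h2 h1 h3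
      · -- N(cy i 0) = {w, cy1, cy3}: x first; reorder the set
        refine honly (cy t i 0) (cy t i 1) (cy t i 3) (w t) ?_ h0 h1 h3
        rw [nbrs_cy0]
        ext u
        simp only [mem_insert, mem_singleton]
        tauto
      · exact honly _ _ _ _ (nbrs_cy1 i) h1 h0 h2
  -- assemble
  have hdisjCi : ∀ (i : Fin t), ∀ j : Fin t, i ≠ j → Disjoint (S ∩ Ci t i) (S ∩ Ci t j) := by
    intro i j hij
    rw [disjoint_left]
    intro u hu hu'
    simp only [mem_inter] at hu hu'
    obtain ⟨a, rfl⟩ := mem_Ci hu.2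
    obtain ⟨b, hb⟩ := mem_Ci hu'.2
    exact hij (cy_inj.mp hb).1
  have hT : 2 * t ≤ ((univ : Finset (Fin t)).biUnion (fun i => S ∩ Ci t i)).card := by
    rw [card_biUnion (fun i _ j _ hij => hdisjCi i j hij)]
    calc 2 * t = ∑ _i : Fin t, 2 := by rw [Finset.sum_const, card_univ, Fintype.card_fin,
      smul_eq_mul, mul_comm]
    _ ≤ _ := Finset.sum_le_sum (fun i _ => key i)
  have hdisjPT : Disjoint (P t) ((univ : Finset (Fin t)).biUnion (fun i => S ∩ Ci t i)) := by
    rw [disjoint_left]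
    intro u hu hu'
    obtain ⟨i, p, rfl⟩ := mem_P.mp hu
    obtain ⟨j, -, hj⟩ := mem_biUnion.mp hu'
    simp only [mem_inter] at hj
    obtain ⟨a, ha⟩ := mem_Ci hj.2
    exact pd_ne_cy ha
  have hsubS : P t ∪ ((univ : Finset (Fin t)).biUnion (fun i => S ∩ Ci t i)) ⊆ S := by
    intro u hu
    rcases mem_union.mp hu with hu | hu
    · exact hPS hu
    · obtain ⟨j, -, hj⟩ := mem_biUnion.mp hu
      simp only [mem_inter] at hj
      exact hj.1
  calc 5 * t = 3 * t + 2 * t := by ring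
  _ ≤ (P t).card + ((univ : Finset (Fin t)).biUnion (fun i => S ∩ Ci t i)).card := by
      rw [card_P]; omega
  _ = (P t ∪ ((univ : Finset (Fin t)).biUnion (fun i => S ∩ Ci t i))).card :=
      (card_union_of_disjoint hdisjPT).symm
  _ ≤ S.card := card_le_card hsubS

lemma gamma2_eq (ht : 4 ≤ t) : gamma2 (G t) = 5 * t := by
  have hmem : 5 * t ∈ {k | ∃ S : Finset (V t), IsTwoDomSet (G t) S ∧ S.card = k} :=
    ⟨D t, D_twodom ht, card_D⟩
  refine le_antisymm (Nat.sInf_le hmem) (le_csInf ⟨_, hmem⟩ ?_)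
  rintro k ⟨S, hS, rfl⟩
  exact lower_bound ht S hS

end Stmt13

/-- For `t ≥ 4`, the graph `G(t;1,…,1)` satisfies `a(G) = 4t + ⌊2t/3⌋`, `γ₂(G) = 5t`,
hence `γ₂(G) − a(G) = ⌈t/3⌉`. -/

theorem stmt13 (t : ℕ) (ht : 4 ≤ t) :
    annihilation (GG t fun _ => 1) = 4 * t + 2 * t / 3 ∧
    gamma2 (GG t fun _ => 1) = 5 * t ∧
    gamma2 (GG t fun _ => 1) - annihilation (GG t fun _ => 1) = (t + 2) / 3 := by
  refine ⟨Stmt13.ann_eq ht, Stmt13.gamma2_eq ht, ?_⟩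
  rw [Stmt13.gamma2_eq ht, Stmt13.ann_eq ht]
  omega
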